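/- For all integers n > d ≥ 2 and 0 ≤ k < ⌊d/2⌋, the rational number F(d,n,k) equals binom(n, k+1). -/

import Mathlib

noncomputable section

/-- `ρ(d,k) = (1/2)(binom(⌈d/2⌉,k) + binom(⌊d/2⌋,k))`. -/
def rho (d k : ℕ) : ℚ :=
  (((d + 1) / 2).choose k + (d / 2).choose k) / 2

/-- Extended binomial coefficient: `binom(a,b) = 0` unless `0 ≤ b ≤ a`. -/
def ichoose (a b : ℤ) : ℤ :=
  if 0 ≤ b ∧ b ≤ a then (a.toNat).choose b.toNat else 0

/-- `δ(d) = ⌈d/2⌉ - ⌊d/2⌋`. -/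
def deltaPar (d : ℕ) : ℕ := (d + 1) / 2 - d / 2

/-- `F(d,n,k)`, the number of `k`-faces of the cyclic polytope `C(d,n)` (for `d ≥ 2`). -/
def Fcyc (d n k : ℕ) : ℚ :=
  (((n : ℚ) - (deltaPar d : ℚ) * ((n : ℚ) - (k : ℚ) - 2)) / ((n : ℚ) - (k : ℚ) - 1)) *
    ∑ j ∈ Finset.range (d / 2 + 1),
      (ichoose ((n : ℤ) - 1 - (j : ℤ)) ((k : ℤ) + 1 - (j : ℤ)) : ℚ) *
        (ichoose ((n : ℤ) - (k : ℤ) - 1) (2 * (j : ℤ) - (k : ℤ) - 1 + (deltaPar d : ℤ)) : ℚ)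

/-- `Ffac(d,n)`, the number of facets of the cyclic polytope `C(d,n)` (for `d ≥ 2`). -/
def Ffac (d n : ℕ) : ℚ :=
  (ichoose ((n : ℤ) - (((d + 1) / 2 : ℕ) : ℤ)) ((n : ℤ) - (d : ℤ)) : ℚ) +
    (ichoose ((n : ℤ) - (((d + 2) / 2 : ℕ) : ℤ)) ((n : ℤ) - (d : ℤ)) : ℚ)

/- ### Auxiliary lemmas -/

lemma ichoose_of_nonneg {a b : ℤ} (ha : 0 ≤ a) (hb : 0 ≤ b) :
    ichoose a b = (a.toNat).choose b.toNat := by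
  unfold ichoose
  by_cases h : b ≤ a
  · rw [if_pos ⟨hb, h⟩]
  · rw [if_neg (by tauto), Nat.choose_eq_zero_of_lt (by omega)]
    simp

lemma ichoose_of_neg {a b : ℤ} (hb : b < 0) : ichoose a b = 0 := by
  unfold ichoose
  rw [if_neg (by omega)]

/-- The power series `(1 - X²)⁻ᵐ = ∑ C(m-1+i, i) X^{2i}` (for `m ≥ 1`). -/
def Gser (m : ℕ) : PowerSeries ℚ :=
  PowerSeries.mk fun s => if 2 ∣ s then ((m - 1 + s / 2).choose (s / 2) : ℚ) else 0

lemma Gser_mul (m : ℕ) (hm : 1 ≤ m) :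
    Gser (m + 1) * (1 - PowerSeries.X ^ 2) = Gser m := by
  ext s
  rw [mul_sub, mul_one, map_sub, PowerSeries.coeff_mul_X_pow']
  simp only [Gser, PowerSeries.coeff_mk]
  rcases Nat.even_or_odd s with he | ho
  · obtain ⟨i, rfl⟩ := he
    have h2 : 2 ∣ i + i := ⟨i, by ring⟩
    rw [if_pos h2, if_pos h2]
    rcases Nat.eq_zero_or_pos i with rfl | hi
    · simp
    · obtain ⟨j, rfl⟩ : ∃ j, i = j + 1 := ⟨i - 1, by omega⟩
      have h2' : (2:ℕ) ≤ (j+1) + (j+1) := by omega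
      rw [if_pos h2']
      have hdd : 2 ∣ (j+1) + (j+1) - 2 := by omega
      rw [if_pos hdd]
      have e1 : ((j+1) + (j+1)) / 2 = j + 1 := by omega
      have e2 : ((j+1) + (j+1) - 2) / 2 = j := by omega
      rw [e1, e2]
      have e3 : m + 1 - 1 + (j+1) = (m + j) + 1 := by omega
      have e4 : m + 1 - 1 + j = m + j := by omega
      have e5 : m - 1 + (j+1) = m + j := by omega
      rw [e3, e4, e5, Nat.choose_succ_succ (m+j) j]
      push_cast
      ring
  · rw [Nat.odd_iff] at ho
    have h1 : ¬ (2 ∣ s) := by omega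
    rw [if_neg h1, if_neg h1]
    by_cases h2 : 2 ≤ s
    · rw [if_pos h2, if_neg (by omega)]
      ring
    · rw [if_neg h2]
      ring

lemma Gser_one : Gser 1 * (1 - PowerSeries.X ^ 2) = 1 := by
  ext s
  rw [mul_sub, mul_one, map_sub, PowerSeries.coeff_mul_X_pow']
  simp only [Gser, PowerSeries.coeff_mk, PowerSeries.coeff_one]
  have hone : ∀ u : ℕ, (1 - 1 + u / 2).choose (u / 2) = 1 := by
    intro u
    simp [Nat.choose_self]
  rcases Nat.eq_zero_or_pos s with rfl | hs
  · norm_num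
  · rw [if_neg (by omega : ¬ s = 0)]
    by_cases h : 2 ∣ s
    · have h2 : 2 ≤ s := by omega
      have hd : 2 ∣ s - 2 := by omega
      rw [if_pos h, if_pos h2, if_pos hd, hone, hone]
      ring
    · rw [if_neg h]
      by_cases h2 : 2 ≤ s
      · rw [if_pos h2, if_neg (by omega)]
        ring
      · rw [if_neg h2]
        ring

lemma Gser_pow (m : ℕ) (hm : 1 ≤ m) : Gser m * (1 - PowerSeries.X ^ 2) ^ m = 1 := by
  obtain ⟨p, rfl⟩ : ∃ p, m = p + 1 := ⟨m - 1, by omega⟩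
  clear hm
  induction p with
  | zero => rw [pow_one]; exact Gser_one
  | succ p ih =>
      have step : Gser (p + 1 + 1) * (1 - PowerSeries.X ^ 2) ^ (p + 1 + 1)
          = (Gser (p + 1 + 1) * (1 - PowerSeries.X ^ 2)) * (1 - PowerSeries.X ^ 2) ^ (p + 1) := by
        ring
      rw [step, Gser_mul (p+1) (by omega), ih]

lemma coeff_one_add_X_pow' (m a : ℕ) :
    PowerSeries.coeff (R := ℚ) a ((1 + PowerSeries.X) ^ m) = (m.choose a : ℚ) := by
  have h : ((1 + Polynomial.X : Polynomial ℚ) : PowerSeries ℚ) = 1 + PowerSeries.X := by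
    push_cast
    rfl
  rw [← h, ← Polynomial.coe_pow, Polynomial.coeff_coe, Polynomial.coeff_one_add_X_pow]

/-- Key identity: `∑ᵢ C(m-1+i, i) C(m, t-2i) = C(m-1+t, t)`, i.e. the coefficient of
`(1-X)⁻ᵐ = (1+X)ᵐ (1-X²)⁻ᵐ`. -/
lemma Lstar (m t : ℕ) (hm : 1 ≤ m) :
    ∑ i ∈ Finset.range (t / 2 + 1),
      ((m - 1 + i).choose i : ℚ) * (m.choose (t - 2 * i) : ℚ)
      = ((m - 1 + t).choose t : ℚ) := by
  have h2 : ((1:PowerSeries ℚ) + PowerSeries.X) * (1 - PowerSeries.X) = 1 - PowerSeries.X ^ 2 := by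
    ring
  have hunit : ((1 + PowerSeries.X) ^ m * Gser m) * (1 - PowerSeries.X : PowerSeries ℚ) ^ m = 1 := by
    calc ((1 + PowerSeries.X) ^ m * Gser m) * (1 - PowerSeries.X : PowerSeries ℚ) ^ m
        = Gser m * ((1 + PowerSeries.X) * (1 - PowerSeries.X)) ^ m := by
          rw [mul_pow]; ring
      _ = Gser m * (1 - PowerSeries.X ^ 2) ^ m := by rw [h2]
      _ = 1 := Gser_pow m hm
  have heq : (1 + PowerSeries.X) ^ m * Gser m = (PowerSeries.invOneSubPow ℚ m).val := by
    have hv := (PowerSeries.invOneSubPow ℚ m).inv_val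
    calc (1 + PowerSeries.X) ^ m * Gser m
        = ((1 + PowerSeries.X) ^ m * Gser m) *
            ((PowerSeries.invOneSubPow ℚ m).inv * (PowerSeries.invOneSubPow ℚ m).val) := by
          rw [hv, mul_one]
      _ = (((1 + PowerSeries.X) ^ m * Gser m) * (1 - PowerSeries.X) ^ m) *
            (PowerSeries.invOneSubPow ℚ m).val := by
          rw [PowerSeries.invOneSubPow_inv_eq_one_sub_pow]; ring
      _ = (PowerSeries.invOneSubPow ℚ m).val := by rw [hunit, one_mul]
  have hco := congrArg (PowerSeries.coeff (R := ℚ) t) heq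
  rw [PowerSeries.coeff_mul,
    PowerSeries.invOneSubPow_val_eq_mk_sub_one_add_choose_of_pos ℚ m hm,
    PowerSeries.coeff_mk, Finset.Nat.sum_antidiagonal_eq_sum_range_succ_mk] at hco
  simp only [coeff_one_add_X_pow', Gser, PowerSeries.coeff_mk] at hco
  set F : ℕ → ℚ := fun a =>
    (m.choose a : ℚ) * (if 2 ∣ t - a then ((m - 1 + (t - a) / 2).choose ((t - a) / 2) : ℚ) else 0)
    with hF
  have himage : ∑ a ∈ (Finset.range (t / 2 + 1)).image (fun i => t - 2 * i), F a
      = ∑ a ∈ Finset.range (t + 1), F a := by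
    apply Finset.sum_subset
    · intro a ha
      simp only [Finset.mem_image, Finset.mem_range] at ha ⊢
      omega
    · intro a ha hna
      simp only [Finset.mem_image, Finset.mem_range] at ha hna
      have hodd : ¬ (2 ∣ t - a) := by
        intro hdvd
        obtain ⟨c, hc⟩ := hdvd
        exact hna ⟨c, by omega, by omega⟩
      rw [hF]
      simp only [if_neg hodd, mul_zero]
  have hinj : ∑ a ∈ (Finset.range (t / 2 + 1)).image (fun i => t - 2 * i), F a
      = ∑ i ∈ Finset.range (t / 2 + 1), F (t - 2 * i) := by
    apply Finset.sum_image
    intro x hx y hy hxy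
    simp only [Finset.coe_range, Set.mem_Iio, Finset.mem_coe, Finset.mem_range] at hx hy hxy
    omega
  have hterm : ∀ i ∈ Finset.range (t / 2 + 1),
      F (t - 2 * i) = ((m - 1 + i).choose i : ℚ) * (m.choose (t - 2 * i) : ℚ) := by
    intro i hi
    simp only [Finset.mem_range] at hi
    have h1 : t - (t - 2 * i) = 2 * i := by omega
    have h2' : 2 ∣ 2 * i := ⟨i, by ring⟩
    rw [hF]
    simp only [h1, if_pos h2', Nat.mul_div_cancel_left i (by norm_num : 0 < 2)]
    ring
  have hsym : ((m - 1 + t).choose (m - 1) : ℚ) = ((m - 1 + t).choose t : ℚ) := by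
    norm_cast
    rw [← Nat.choose_symm (by omega : m - 1 ≤ m - 1 + t)]
    congr 1
    omega
  calc ∑ i ∈ Finset.range (t / 2 + 1),
        ((m - 1 + i).choose i : ℚ) * (m.choose (t - 2 * i) : ℚ)
      = ∑ i ∈ Finset.range (t / 2 + 1), F (t - 2 * i) :=
        Finset.sum_congr rfl (fun i hi => (hterm i hi).symm)
    _ = ∑ a ∈ (Finset.range (t / 2 + 1)).image (fun i => t - 2 * i), F a := hinj.symm
    _ = ∑ a ∈ Finset.range (t + 1), F a := himage
    _ = ((m - 1 + t).choose (m - 1) : ℚ) := hco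
    _ = ((m - 1 + t).choose t : ℚ) := hsym

/-- Evaluation of the truncated `ichoose` sum. -/
lemma sum_core (n k δ : ℕ) (hδ : δ ≤ 1) (hn : 2 * k + 3 ≤ n) :
    ∑ j ∈ Finset.range (k + 2),
      (ichoose ((n : ℤ) - 1 - (j : ℤ)) ((k : ℤ) + 1 - (j : ℤ)) : ℚ) *
        (ichoose ((n : ℤ) - (k : ℤ) - 1) (2 * (j : ℤ) - (k : ℤ) - 1 + (δ : ℤ)) : ℚ)
      = ((n - k - 2 + (k + 1 + δ)).choose (k + 1 + δ) : ℚ) := by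
  set t := k + 1 + δ with ht
  set m := n - k - 1 with hm
  have hm1 : 1 ≤ m := by omega
  rw [← Finset.sum_range_reflect]
  have hstep : ∀ i ∈ Finset.range (k + 2),
      (ichoose ((n : ℤ) - 1 - ((k + 2 - 1 - i : ℕ) : ℤ)) ((k : ℤ) + 1 - ((k + 2 - 1 - i : ℕ) : ℤ)) : ℚ) *
        (ichoose ((n : ℤ) - (k : ℤ) - 1) (2 * ((k + 2 - 1 - i : ℕ) : ℤ) - (k : ℤ) - 1 + (δ : ℤ)) : ℚ)
      = ((m - 1 + i).choose i : ℚ) * (ichoose ((m : ℕ) : ℤ) ((t : ℤ) - 2 * (i : ℤ)) : ℚ) := by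
    intro i hi
    simp only [Finset.mem_range] at hi
    have e1 : (n : ℤ) - 1 - ((k + 2 - 1 - i : ℕ) : ℤ) = ((m - 1 + i : ℕ) : ℤ) := by omega
    have e2 : (k : ℤ) + 1 - ((k + 2 - 1 - i : ℕ) : ℤ) = ((i : ℕ) : ℤ) := by omega
    have e3 : 2 * ((k + 2 - 1 - i : ℕ) : ℤ) - (k : ℤ) - 1 + (δ : ℤ) = (t : ℤ) - 2 * (i : ℤ) := by
      omega
    have e4 : (n : ℤ) - (k : ℤ) - 1 = ((m : ℕ) : ℤ) := by omega
    rw [e1, e2, e3, e4, ichoose_of_nonneg (by positivity) (by positivity)]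
    congr 2
  rw [Finset.sum_congr rfl hstep]
  have hsub : Finset.range (t / 2 + 1) ⊆ Finset.range (k + 2) := by
    intro x hx
    simp only [Finset.mem_range] at hx ⊢
    omega
  have hvan : ∀ i ∈ Finset.range (k + 2), i ∉ Finset.range (t / 2 + 1) →
      ((m - 1 + i).choose i : ℚ) * (ichoose ((m : ℕ) : ℤ) ((t : ℤ) - 2 * (i : ℤ)) : ℚ) = 0 := by
    intro i hi hni
    simp only [Finset.mem_range] at hi hni
    rw [ichoose_of_neg (by omega : (t : ℤ) - 2 * (i : ℤ) < 0)]
    simp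
  rw [← Finset.sum_subset hsub hvan]
  have hfin : ∀ i ∈ Finset.range (t / 2 + 1),
      ((m - 1 + i).choose i : ℚ) * (ichoose ((m : ℕ) : ℤ) ((t : ℤ) - 2 * (i : ℤ)) : ℚ)
      = ((m - 1 + i).choose i : ℚ) * (m.choose (t - 2 * i) : ℚ) := by
    intro i hi
    simp only [Finset.mem_range] at hi
    have g2 : ((t : ℤ) - 2 * (i : ℤ)).toNat = t - 2 * i := by omega
    rw [ichoose_of_nonneg (by positivity) (by omega : (0:ℤ) ≤ (t : ℤ) - 2 * (i : ℤ)),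
      Int.toNat_natCast, g2]
    push_cast
    ring
  rw [Finset.sum_congr rfl hfin, Lstar m t hm1]
  have efin : m - 1 + t = n - k - 2 + (k + 1 + δ) := by omega
  rw [efin]

/-- For `n > d ≥ 2` and `0 ≤ k < ⌊d/2⌋`, `F(d,n,k) = binom(n,k+1)`. -/
theorem cyclic_neighborly (d n k : ℕ) (hd : 2 ≤ d) (hn : d < n) (hk : k < d / 2) :
    Fcyc d n k = (n.choose (k + 1) : ℚ) := by
  have hd2 : 2 * k + 2 ≤ d := by omega
  have hn2 : 2 * k + 3 ≤ n := by omega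
  have hδ : deltaPar d = d % 2 := by unfold deltaPar; omega
  unfold Fcyc
  rw [hδ]
  have hsub : Finset.range (k + 2) ⊆ Finset.range (d / 2 + 1) := by
    intro x hx
    simp only [Finset.mem_range] at hx ⊢
    omega
  have hzero : ∀ j ∈ Finset.range (d / 2 + 1), j ∉ Finset.range (k + 2) →
      (ichoose ((n : ℤ) - 1 - (j : ℤ)) ((k : ℤ) + 1 - (j : ℤ)) : ℚ) *
        (ichoose ((n : ℤ) - (k : ℤ) - 1) (2 * (j : ℤ) - (k : ℤ) - 1 + ((d % 2 : ℕ) : ℤ)) : ℚ) = 0 := by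
    intro j hj hnj
    simp only [Finset.mem_range] at hj hnj
    rw [ichoose_of_neg (by omega : (k : ℤ) + 1 - (j : ℤ) < 0)]
    simp
  rw [← Finset.sum_subset hsub hzero, sum_core n k (d % 2) (by omega) hn2]
  have hkn : (2 * (k : ℚ) + 3) ≤ (n : ℚ) := by exact_mod_cast hn2
  have hk0 : (0 : ℚ) ≤ (k : ℚ) := Nat.cast_nonneg k
  have hpos : (0 : ℚ) < (n : ℚ) - (k : ℚ) - 1 := by linarith
  have hne : (n : ℚ) - (k : ℚ) - 1 ≠ 0 := ne_of_gt hpos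
  rcases Nat.mod_two_eq_zero_or_one d with h2 | h2 <;> rw [h2]
  · -- d even
    have e : n - k - 2 + (k + 1 + 0) = n - 1 := by omega
    rw [e]
    have hrec : (n - 1).choose (k + 1) * n = n.choose (k + 1) * (n - (k + 1)) := by
      have h := Nat.choose_mul_succ_eq (n - 1) (k + 1)
      rw [show n - 1 + 1 = n from by omega] at h
      rw [h]
    have hq : ((n - 1).choose (k + 1) : ℚ) * (n : ℚ)
        = (n.choose (k + 1) : ℚ) * ((n : ℚ) - (k : ℚ) - 1) := by
      have := congrArg (fun x : ℕ => (x : ℚ)) hrec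
      push_cast [Nat.cast_sub (show k + 1 ≤ n by omega)] at this
      linarith [this]
    rw [div_mul_eq_mul_div, div_eq_iff hne]
    push_cast
    linear_combination hq
  · -- d odd
    have e : n - k - 2 + (k + 1 + 1) = n := by omega
    rw [e]
    have hrec : n.choose (k + 1 + 1) * (k + 1 + 1) = n.choose (k + 1) * (n - (k + 1)) :=
      Nat.choose_succ_right_eq n (k + 1)
    have hq : (n.choose (k + 2) : ℚ) * ((k : ℚ) + 2)
        = (n.choose (k + 1) : ℚ) * ((n : ℚ) - (k : ℚ) - 1) := by
      have := congrArg (fun x : ℕ => (x : ℚ)) hrec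
      push_cast [Nat.cast_sub (show k + 1 ≤ n by omega)] at this
      linarith [this]
    rw [div_mul_eq_mul_div, div_eq_iff hne]
    push_cast
    linear_combination hq
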